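/- arXiv:1703.06955 — 2 statements merged into one kernel-verified Lean document; each statement's English description precedes it below -/
import Mathlib

section
/- Define formal power series inductively: given a power series F(x,z⁻¹) = ∑_{q≥0} f_q(x) z^{−q} with f_0(0) ≠ 0 (f_q formal power series in x), the Birkhoff factorization operator M F := z·(d/dx)(F/f_0) produces a series of the same shape. Claim: if F = I^{LG,λ}(t,z)/z with I^{LG,λ}(t,z) = z∑_{a≥0}(t^a/(z^a a!))∏_{0<k<(a+1)/5, ⟨k⟩=⟨(a+1)/5⟩}((kz)⁵+λ⁵)φ_a (components indexed by a mod 5), then the φ_0 components I^{LG}_{p,p} for p = 0,...,4 satisfy I_{0,0}·I_{1,1}·I_{2,2}·I_{3,3}·I_{4,4} = (1 − (t/5)⁵)⁻¹ when λ = 0. -/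
open scoped BigOperators
open PowerSeries

/-- The `q`-th component of the (untwisted, extended) LG `I`-function of the quintic
at `λ = 0`, `z = 1`:  `I_q(t) = ∑_{a ≡ q mod 5} (t^a / a!) ∏ k⁵`, where `k` ranges over
`0 < k < (a+1)/5` with `⟨k⟩ = ⟨(a+1)/5⟩`; writing `a = 5n + r` the product is
`∏_{m=0}^{n-1} ((5m + r + 1)/5)⁵`. -/
noncomputable def lgI (q : ℕ) : PowerSeries ℚ :=
  PowerSeries.mk fun a =>
    if a % 5 = q then
      (∏ m ∈ Finset.range (a / 5), (((5 * m + a % 5 + 1 : ℕ) : ℚ) / 5) ^ 5) /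
        (a.factorial : ℚ)
    else 0

/-- The Birkhoff-factorization series `I_{p,q}`: `I_{0,q} = I_q` and
`I_{p,q} = d/dt (I_{p-1,q} / I_{p-1,p-1})`. -/
noncomputable def lgIpq : ℕ → ℕ → PowerSeries ℚ
  | 0, q => lgI q
  | p + 1, q => (lgIpq p q * (lgIpq p p)⁻¹).derivativeFun

namespace LGAux

/-! ### derivative basics -/

noncomputable def dd (f : PowerSeries ℚ) : PowerSeries ℚ := f.derivativeFun

lemma coeff_dd (f : PowerSeries ℚ) (n : ℕ) :
    (PowerSeries.coeff n) (dd f) = (PowerSeries.coeff (n+1)) f * (n+1) :=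
  PowerSeries.coeff_derivativeFun f n

lemma dd_add (f g : PowerSeries ℚ) : dd (f + g) = dd f + dd g :=
  PowerSeries.derivativeFun_add f g

lemma dd_mul (f g : PowerSeries ℚ) : dd (f * g) = dd f * g + f * dd g := by
  rw [dd, PowerSeries.derivativeFun_mul]
  simp only [smul_eq_mul, dd]; ring

lemma dd_neg (f : PowerSeries ℚ) : dd (-f) = - dd f := by
  exact (PowerSeries.derivative ℚ).map_neg f

lemma dd_sub (f g : PowerSeries ℚ) : dd (f - g) = dd f - dd g := by
  rw [sub_eq_add_neg, dd_add, dd_neg, sub_eq_add_neg]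

lemma dd_C (r : ℚ) : dd (PowerSeries.C (R := ℚ) r) = 0 := PowerSeries.derivative_C (r := r)

lemma dd_one : dd (1 : PowerSeries ℚ) = 0 := PowerSeries.derivativeFun_one

lemma dd_zero : dd (0 : PowerSeries ℚ) = 0 := by
  exact (PowerSeries.derivative ℚ).map_zero

lemma dd_X : dd (X : PowerSeries ℚ) = 1 := PowerSeries.derivative_X (R := ℚ)

lemma dd_X1 : dd ((X : PowerSeries ℚ) ^ 1) = 1 := by rw [pow_one, dd_X]

lemma dd_X2 : dd ((X : PowerSeries ℚ) ^ 2) = C (R := ℚ) 2 * X ^ 1 := by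
  ext n
  rw [coeff_dd, PowerSeries.coeff_C_mul, PowerSeries.coeff_X_pow, PowerSeries.coeff_X_pow]
  by_cases h : n = 1
  · subst h; norm_num
  · rw [if_neg h, if_neg (by omega)]; simp

lemma dd_X3 : dd ((X : PowerSeries ℚ) ^ 3) = C (R := ℚ) 3 * X ^ 2 := by
  ext n
  rw [coeff_dd, PowerSeries.coeff_C_mul, PowerSeries.coeff_X_pow, PowerSeries.coeff_X_pow]
  by_cases h : n = 2
  · subst h; norm_num
  · rw [if_neg h, if_neg (by omega)]; simp

lemma dd_X4 : dd ((X : PowerSeries ℚ) ^ 4) = C (R := ℚ) 4 * X ^ 3 := by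
  ext n
  rw [coeff_dd, PowerSeries.coeff_C_mul, PowerSeries.coeff_X_pow, PowerSeries.coeff_X_pow]
  by_cases h : n = 3
  · subst h; norm_num
  · rw [if_neg h, if_neg (by omega)]; simp

lemma dd_X5 : dd ((X : PowerSeries ℚ) ^ 5) = C (R := ℚ) 5 * X ^ 4 := by
  ext n
  rw [coeff_dd, PowerSeries.coeff_C_mul, PowerSeries.coeff_X_pow, PowerSeries.coeff_X_pow]
  by_cases h : n = 4
  · subst h; norm_num
  · rw [if_neg h, if_neg (by omega)]; simp

/-! ### support (mod 5) and initial coefficients -/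

/-- support contained in arithmetic progression `r mod 5` -/
def Sup (r : ℕ) (f : PowerSeries ℚ) : Prop :=
  ∀ n : ℕ, n % 5 ≠ r % 5 → (PowerSeries.coeff n) f = 0

lemma sup_congr {r s : ℕ} (h : r % 5 = s % 5) {f : PowerSeries ℚ} (hf : Sup r f) : Sup s f :=
  fun n hn => hf n (by omega)

lemma sup_lgI (q : ℕ) (hq : q < 5) : Sup q (lgI q) := by
  intro n hn
  simp only [lgI, PowerSeries.coeff_mk]
  rw [if_neg (by omega)]

lemma sup_mul {r s : ℕ} {f g : PowerSeries ℚ} (hf : Sup r f) (hg : Sup s g) :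
    Sup (r + s) (f * g) := by
  intro n hn
  rw [PowerSeries.coeff_mul]
  apply Finset.sum_eq_zero
  rintro ⟨i, j⟩ hij
  rw [Finset.HasAntidiagonal.mem_antidiagonal] at hij
  by_cases hi : i % 5 = r % 5
  · have : j % 5 ≠ s % 5 := by omega
    simp [hg j this]
  · simp [hf i hi]

lemma sup_dd {r : ℕ} {f : PowerSeries ℚ} (hf : Sup (r + 1) f) : Sup r (dd f) := by
  intro n hn
  rw [coeff_dd, hf (n+1) (by omega), zero_mul]

lemma sup_inv {f : PowerSeries ℚ} (hf : Sup 0 f) : Sup 0 f⁻¹ := by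
  intro n
  induction n using Nat.strong_induction_on with
  | _ n ih =>
    intro hn
    have hn0 : n ≠ 0 := by omega
    rw [PowerSeries.coeff_inv, if_neg hn0]
    rw [show ∑ x ∈ Finset.HasAntidiagonal.antidiagonal n,
        (if x.2 < n then (PowerSeries.coeff x.1) f * (PowerSeries.coeff x.2) f⁻¹ else 0) = 0
      from ?_, mul_zero]
    apply Finset.sum_eq_zero
    rintro ⟨i, j⟩ hij
    rw [Finset.HasAntidiagonal.mem_antidiagonal] at hij
    by_cases hj : j < n
    · rw [if_pos hj]
      by_cases hj5 : j % 5 = 0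
      · have : i % 5 ≠ 0 % 5 := by omega
        rw [hf i this, zero_mul]
      · rw [ih j hj (by omega), mul_zero]
    · rw [if_neg hj]

lemma sup_Ipq : ∀ p d : ℕ, p + d ≤ 4 → Sup d (lgIpq p (p + d)) := by
  intro p
  induction p with
  | zero =>
      intro d hd
      show Sup d (lgI (0 + d))
      rw [Nat.zero_add]
      exact sup_lgI d (by omega)
  | succ p ih =>
      intro d hd
      have h1 : Sup (d+1) (lgIpq p (p + (d+1))) := ih (d+1) (by omega)
      have h0 : Sup 0 (lgIpq p (p + 0)) := ih 0 (by omega)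
      rw [Nat.add_zero] at h0
      have : lgIpq (p+1) (p+1+d) = dd (lgIpq p (p+1+d) * (lgIpq p p)⁻¹) := rfl
      rw [this, show p+1+d = p+(d+1) from by omega]
      exact sup_dd (sup_congr (by omega) (sup_mul h1 (sup_inv h0)))

lemma coeff_Ipq : ∀ p d : ℕ, p + d ≤ 4 →
    (PowerSeries.coeff d) (lgIpq p (p + d)) = 1 / (d.factorial : ℚ) := by
  intro p
  induction p with
  | zero =>
      intro d hd
      show (PowerSeries.coeff d) (lgI (0 + d)) = _
      rw [Nat.zero_add]
      simp only [lgI, PowerSeries.coeff_mk]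
      rw [if_pos (Nat.mod_eq_of_lt (by omega)), Nat.div_eq_of_lt (by omega)]
      simp
  | succ p ih =>
      intro d hd
      have key : lgIpq (p+1) (p+1+d) = dd (lgIpq p (p+(d+1)) * (lgIpq p p)⁻¹) := by
        rw [show p+(d+1) = p+1+d from by omega]; rfl
      rw [key, coeff_dd, PowerSeries.coeff_mul]
      rw [Finset.sum_eq_single_of_mem (d+1, 0) (Finset.HasAntidiagonal.mem_antidiagonal.2 (by omega))]
      · have hA : (PowerSeries.coeff (d+1)) (lgIpq p (p+(d+1))) = 1 / ((d+1).factorial : ℚ) :=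
          ih (d+1) (by omega)
        have hB0 : (PowerSeries.coeff 0) ((lgIpq p p)⁻¹) = 1 := by
          rw [PowerSeries.coeff_zero_eq_constantCoeff, PowerSeries.constantCoeff_inv]
          have := ih 0 (by omega)
          rw [Nat.add_zero] at this
          rw [← PowerSeries.coeff_zero_eq_constantCoeff, this]
          norm_num
        rw [hA, hB0, Nat.factorial_succ]
        have : ((d+1).factorial : ℚ) ≠ 0 := Nat.cast_ne_zero.2 (Nat.factorial_ne_zero _)
        field_simp
        push_cast; ring
      · rintro ⟨i, j⟩ hij hne
        rw [Finset.HasAntidiagonal.mem_antidiagonal] at hij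
        have hilt : i < d + 1 := by
          rcases eq_or_lt_of_le (show i ≤ d+1 from by omega) with h | h
          · exfalso; exact hne (by rw [h, show j = 0 from by omega])
          · exact h
        have hi : i % 5 ≠ (d+1) % 5 := by omega
        rw [sup_Ipq p (d+1) (by omega) i hi, zero_mul]

lemma c0_J (p : ℕ) (hp : p ≤ 4) : PowerSeries.constantCoeff (R := ℚ) (lgIpq p p) = 1 := by
  have := coeff_Ipq p 0 (by omega)
  rw [Nat.add_zero] at this
  rw [← PowerSeries.coeff_zero_eq_constantCoeff, this]
  norm_num

/-! ### the Picard–Fuchs type operators -/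

/-- order-(≤5) differential operator with coefficients `a0,…,a5` -/
noncomputable def op5 (a0 a1 a2 a3 a4 a5 y : PowerSeries ℚ) : PowerSeries ℚ :=
  a0 * y + a1 * dd y + a2 * dd (dd y) + a3 * dd (dd (dd y)) + a4 * dd (dd (dd (dd y)))
    + a5 * dd (dd (dd (dd (dd y))))

noncomputable def ee : PowerSeries ℚ := 1 - PowerSeries.C (R := ℚ) (1 / 5 ^ 5) * X ^ 5

lemma dd_ee : dd ee = -(C (R := ℚ) 5 * C (R := ℚ) (1/5^5)) * X ^ 4 := by
  rw [ee, dd_sub, dd_one, dd_mul, dd_C, dd_X5]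
  ring

/-- the key coefficient recursion of `lgI` -/
lemma lgI_rec (q n : ℕ) :
    ((n:ℚ)+1) * ((n:ℚ)+2) * ((n:ℚ)+3) * ((n:ℚ)+4) * ((n:ℚ)+5) *
      (PowerSeries.coeff (n+5)) (lgI q) =
    (1/5^5 : ℚ) * ((n:ℚ)+1)^5 * (PowerSeries.coeff n) (lgI q) := by
  simp only [lgI, PowerSeries.coeff_mk]
  by_cases h : n % 5 = q
  · have h5 : (n+5) % 5 = q := by omega
    rw [if_pos h5, if_pos h]
    have hdiv : (n+5)/5 = n/5 + 1 := by omega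
    rw [hdiv, Finset.prod_range_succ]
    have hmod : (n+5) % 5 = n % 5 := by omega
    simp only [hmod]
    have hlast : 5 * (n/5) + n % 5 + 1 = n + 1 := by omega
    rw [hlast]
    have hfact : ((n+5).factorial : ℚ) =
        ((n:ℚ)+5) * ((n:ℚ)+4) * ((n:ℚ)+3) * ((n:ℚ)+2) * ((n:ℚ)+1) * (n.factorial : ℚ) := by
      rw [show n+5 = (n+4)+1 from rfl, Nat.factorial_succ, show n+4 = (n+3)+1 from rfl,
        Nat.factorial_succ, show n+3 = (n+2)+1 from rfl, Nat.factorial_succ,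
        show n+2 = (n+1)+1 from rfl, Nat.factorial_succ, Nat.factorial_succ]
      push_cast
      ring
    rw [hfact]
    have h1 : (n.factorial : ℚ) ≠ 0 := Nat.cast_ne_zero.2 (Nat.factorial_ne_zero _)
    have h2 : ((n:ℚ)+1) ≠ 0 := by positivity
    have h3 : ((n:ℚ)+2) ≠ 0 := by positivity
    have h4 : ((n:ℚ)+3) ≠ 0 := by positivity
    have h5' : ((n:ℚ)+4) ≠ 0 := by positivity
    have h6 : ((n:ℚ)+5) ≠ 0 := by positivity
    push_cast
    field_simp
  · have h5 : ¬ ((n+5) % 5 = q) := by omega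
    rw [if_neg h5, if_neg h]; ring

/-- each `lgI q` satisfies the order-5 equation `L y = 0` -/
lemma opL_lgI (q : ℕ) :
    op5 (-(C (R := ℚ) (1/5^5))) (-(C (R := ℚ) 31 * C (R := ℚ) (1/5^5)) * X^1) (-(C (R := ℚ) 90 * C (R := ℚ) (1/5^5)) * X^2)
      (-(C (R := ℚ) 65 * C (R := ℚ) (1/5^5)) * X^3) (-(C (R := ℚ) 15 * C (R := ℚ) (1/5^5)) * X^4) ee (lgI q) = 0 := by
  ext n
  simp only [op5, ee, neg_mul, sub_mul, one_mul, map_add, map_neg, map_sub, map_zero,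
    mul_assoc, PowerSeries.coeff_C_mul, PowerSeries.coeff_X_pow_mul', coeff_dd]
  rcases Nat.lt_or_ge n 5 with hn | hn
  · have hrec := lgI_rec q n
    interval_cases n <;>
      · norm_num
        norm_num at hrec
        linear_combination hrec
  · obtain ⟨m, rfl⟩ : ∃ m, n = m + 5 := ⟨n - 5, by omega⟩
    rw [if_pos (by omega : 1 ≤ m+5), if_pos (by omega : 2 ≤ m+5), if_pos (by omega : 3 ≤ m+5),
      if_pos (by omega : 4 ≤ m+5), if_pos (by omega : 5 ≤ m+5)]
    simp only [show m+5-1 = m+4 from by omega, show m+5-2 = m+3 from by omega,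
      show m+5-3 = m+2 from by omega, show m+5-4 = m+1 from by omega,
      show m+5-5 = m from by omega]
    have hrec := lgI_rec q (m+5)
    rw [show m+5+5 = m+10 from by omega] at hrec
    push_cast at hrec
    simp only [show m+5+1+1+1+1+1 = m+10 from by omega]
    push_cast
    linear_combination hrec

/-- `dd ∘ N = L` : the 5th-order operator is an exact derivative of the 4th-order one. -/
lemma dd_opN (y : PowerSeries ℚ) :
    dd (op5 (-(C (R := ℚ) (1/5^5)) * X^1) (-(C (R := ℚ) 15 * C (R := ℚ) (1/5^5)) * X^2)
      (-(C (R := ℚ) 25 * C (R := ℚ) (1/5^5)) * X^3) (-(C (R := ℚ) 10 * C (R := ℚ) (1/5^5)) * X^4) ee 0 y) =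
    op5 (-(C (R := ℚ) (1/5^5))) (-(C (R := ℚ) 31 * C (R := ℚ) (1/5^5)) * X^1) (-(C (R := ℚ) 90 * C (R := ℚ) (1/5^5)) * X^2)
      (-(C (R := ℚ) 65 * C (R := ℚ) (1/5^5)) * X^3) (-(C (R := ℚ) 15 * C (R := ℚ) (1/5^5)) * X^4) ee y := by
  simp only [op5, dd_add, dd_mul, dd_neg, dd_C, dd_zero, dd_X1, dd_X2, dd_X3, dd_X4, dd_ee,
    neg_mul, zero_mul]
  have h31 : (C (R := ℚ) 31 : PowerSeries ℚ) = C (R := ℚ) 1 + C (R := ℚ) 2 * C (R := ℚ) 15 := by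
    rw [← map_mul, ← map_add]; norm_num
  have h90 : (C (R := ℚ) 90 : PowerSeries ℚ) = C (R := ℚ) 15 + C (R := ℚ) 3 * C (R := ℚ) 25 := by
    rw [← map_mul, ← map_add]; norm_num
  have h65 : (C (R := ℚ) 65 : PowerSeries ℚ) = C (R := ℚ) 25 + C (R := ℚ) 4 * C (R := ℚ) 10 := by
    rw [← map_mul, ← map_add]; norm_num
  have h15 : (C (R := ℚ) 15 : PowerSeries ℚ) = C (R := ℚ) 10 + C (R := ℚ) 5 := by
    rw [← map_add]; norm_num
  have h1 : (C (R := ℚ) 1 : PowerSeries ℚ) = 1 := map_one _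
  rw [h31, h90, h65, h15, h1]
  ring

lemma dd_eq_zero_iff (f : PowerSeries ℚ) (h : dd f = 0) :
    f = C (R := ℚ) (PowerSeries.constantCoeff (R := ℚ) f) := by
  ext n
  cases n with
  | zero => simp [PowerSeries.coeff_zero_C, PowerSeries.coeff_zero_eq_constantCoeff]
  | succ n =>
      have h1 : (PowerSeries.coeff n) (dd f) = 0 := by rw [h]; simp
      rw [coeff_dd] at h1
      rcases mul_eq_zero.1 h1 with h3 | h3
      · rw [h3]; simp [PowerSeries.coeff_C]
      · exact absurd h3 (Nat.cast_add_one_ne_zero n)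

/-- each `lgI q`, `q ≤ 3`, satisfies the order-4 equation `N y = 0` -/
lemma opN_lgI (q : ℕ) (hq : q < 4) :
    op5 (-(C (R := ℚ) (1/5^5)) * X^1) (-(C (R := ℚ) 15 * C (R := ℚ) (1/5^5)) * X^2)
      (-(C (R := ℚ) 25 * C (R := ℚ) (1/5^5)) * X^3) (-(C (R := ℚ) 10 * C (R := ℚ) (1/5^5)) * X^4) ee 0 (lgI q) = 0 := by
  have h1 : dd (op5 (-(C (R := ℚ) (1/5^5)) * X^1) (-(C (R := ℚ) 15 * C (R := ℚ) (1/5^5)) * X^2)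
      (-(C (R := ℚ) 25 * C (R := ℚ) (1/5^5)) * X^3) (-(C (R := ℚ) 10 * C (R := ℚ) (1/5^5)) * X^4) ee 0 (lgI q)) = 0 := by
    rw [dd_opN, opL_lgI]
  have h2 := dd_eq_zero_iff _ h1
  have h3 : PowerSeries.constantCoeff (R := ℚ) (op5 (-(C (R := ℚ) (1/5^5)) * X^1)
      (-(C (R := ℚ) 15 * C (R := ℚ) (1/5^5)) * X^2) (-(C (R := ℚ) 25 * C (R := ℚ) (1/5^5)) * X^3)
      (-(C (R := ℚ) 10 * C (R := ℚ) (1/5^5)) * X^4) ee 0 (lgI q)) = 0 := by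
    have hc4 : (PowerSeries.coeff 4) (lgI q) = 0 := by
      simp only [lgI, PowerSeries.coeff_mk]
      rw [if_neg (by omega)]
    have hdd4 : PowerSeries.constantCoeff (R := ℚ) (dd (dd (dd (dd (lgI q))))) = 0 := by
      rw [← PowerSeries.coeff_zero_eq_constantCoeff]
      simp only [coeff_dd]
      norm_num [hc4]
    simp only [op5, map_add, map_mul, map_neg, map_zero, zero_mul, map_pow]
    rw [show PowerSeries.constantCoeff (R := ℚ) (X : PowerSeries ℚ) = 0 from PowerSeries.constantCoeff_X,
      hdd4]
    norm_num
  rw [h3, map_zero] at h2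
  exact h2

/-! ### the reduction step -/

/-- Key reduction identity: `op a (y₀ g) = (op a y₀) g + op b (dd g)`. -/
lemma reduce (a0 a1 a2 a3 a4 a5 y0 g : PowerSeries ℚ) :
    op5 a0 a1 a2 a3 a4 a5 (y0 * g) =
      (op5 a0 a1 a2 a3 a4 a5 y0) * g +
      op5 (a1 * y0 + 2 * a2 * dd y0 + 3 * a3 * dd (dd y0) + 4 * a4 * dd (dd (dd y0))
            + 5 * a5 * dd (dd (dd (dd y0))))
          (a2 * y0 + 3 * a3 * dd y0 + 6 * a4 * dd (dd y0) + 10 * a5 * dd (dd (dd y0)))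
          (a3 * y0 + 4 * a4 * dd y0 + 10 * a5 * dd (dd y0))
          (a4 * y0 + 5 * a5 * dd y0)
          (a5 * y0)
          0 (dd g) := by
  simp only [op5, dd_mul, dd_add]
  ring

lemma reduce_zero (a0 a1 a2 a3 a4 a5 y0 w : PowerSeries ℚ)
    (hy : PowerSeries.constantCoeff (R := ℚ) y0 ≠ 0)
    (h0 : op5 a0 a1 a2 a3 a4 a5 y0 = 0) (hw : op5 a0 a1 a2 a3 a4 a5 w = 0) :
    op5 (a1 * y0 + 2 * a2 * dd y0 + 3 * a3 * dd (dd y0) + 4 * a4 * dd (dd (dd y0))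
          + 5 * a5 * dd (dd (dd (dd y0))))
        (a2 * y0 + 3 * a3 * dd y0 + 6 * a4 * dd (dd y0) + 10 * a5 * dd (dd (dd y0)))
        (a3 * y0 + 4 * a4 * dd y0 + 10 * a5 * dd (dd y0))
        (a4 * y0 + 5 * a5 * dd y0)
        (a5 * y0)
        0 (dd (w * y0⁻¹)) = 0 := by
  have hfact : y0 * (w * y0⁻¹) = w := by
    rw [show y0 * (w * y0⁻¹) = (y0 * y0⁻¹) * w from by ring,
      PowerSeries.mul_inv_cancel y0 hy, one_mul]
  have h := reduce a0 a1 a2 a3 a4 a5 y0 (w * y0⁻¹)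
  rw [hfact, hw, h0, zero_mul, zero_add] at h
  exact h.symm

lemma Ipq_succ (p q : ℕ) : lgIpq (p+1) q = dd (lgIpq p q * (lgIpq p p)⁻¹) := rfl

lemma op5_arg_congr {a0 a1 a2 a3 a4 a5 w w' : PowerSeries ℚ} (hww' : w' = w)
    (h : op5 a0 a1 a2 a3 a4 a5 w = 0) : op5 a0 a1 a2 a3 a4 a5 w' = 0 := by
  rw [hww']; exact h

end LGAux

open LGAux in
theorem lg_diagonal_product :
    lgIpq 0 0 * lgIpq 1 1 * lgIpq 2 2 * lgIpq 3 3 * lgIpq 4 4 =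
      (1 - PowerSeries.C (R := ℚ) (1 / 5 ^ 5) * PowerSeries.X ^ 5)⁻¹ := by
  have hc0 : ∀ p, p ≤ 4 → PowerSeries.constantCoeff (R := ℚ) (lgIpq p p) ≠ 0 := by
    intro p hp; rw [c0_J p hp]; norm_num
  -- the L-chain (order 5, all five series)
  have hL0 : ∀ q, op5 (-(C (R := ℚ) (1/5^5))) (-(C (R := ℚ) 31 * C (R := ℚ) (1/5^5)) * X^1)
      (-(C (R := ℚ) 90 * C (R := ℚ) (1/5^5)) * X^2) (-(C (R := ℚ) 65 * C (R := ℚ) (1/5^5)) * X^3)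
      (-(C (R := ℚ) 15 * C (R := ℚ) (1/5^5)) * X^4) ee (lgIpq 0 q) = 0 := fun q => opL_lgI q
  have hL1 := fun (q : ℕ) => op5_arg_congr (Ipq_succ 0 q)
    (reduce_zero _ _ _ _ _ _ _ _ (hc0 0 (by norm_num)) (hL0 0) (hL0 q))
  have hL2 := fun (q : ℕ) => op5_arg_congr (Ipq_succ 1 q)
    (reduce_zero _ _ _ _ _ _ _ _ (hc0 1 (by norm_num)) (hL1 1) (hL1 q))
  have hL3 := fun (q : ℕ) => op5_arg_congr (Ipq_succ 2 q)
    (reduce_zero _ _ _ _ _ _ _ _ (hc0 2 (by norm_num)) (hL2 2) (hL2 q))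
  have hL4 := op5_arg_congr (Ipq_succ 3 4)
    (reduce_zero _ _ _ _ _ _ _ _ (hc0 3 (by norm_num)) (hL3 3) (hL3 4))
  -- the N-chain (order 4, first four series)
  have hN0 : ∀ q, q < 4 → op5 (-(C (R := ℚ) (1/5^5)) * X^1) (-(C (R := ℚ) 15 * C (R := ℚ) (1/5^5)) * X^2)
      (-(C (R := ℚ) 25 * C (R := ℚ) (1/5^5)) * X^3) (-(C (R := ℚ) 10 * C (R := ℚ) (1/5^5)) * X^4) ee 0 (lgIpq 0 q) = 0 :=
    fun q hq => opN_lgI q hq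
  have hN1 := fun (q : ℕ) (hq : q < 4) => op5_arg_congr (Ipq_succ 0 q)
    (reduce_zero _ _ _ _ _ _ _ _ (hc0 0 (by norm_num)) (hN0 0 (by norm_num)) (hN0 q hq))
  have hN2 := fun (q : ℕ) (hq : q < 4) => op5_arg_congr (Ipq_succ 1 q)
    (reduce_zero _ _ _ _ _ _ _ _ (hc0 1 (by norm_num)) (hN1 1 (by norm_num)) (hN1 q hq))
  have hN3 := op5_arg_congr (Ipq_succ 2 3)
    (reduce_zero _ _ _ _ _ _ _ _ (hc0 2 (by norm_num)) (hN2 2 (by norm_num)) (hN2 3 (by norm_num)))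
  -- combine: dd (ee * P) = 0
  have key : dd (ee * (lgIpq 0 0 * lgIpq 1 1 * lgIpq 2 2 * lgIpq 3 3 * lgIpq 4 4)) = 0 := by
    simp only [op5] at hL4 hN3
    have h15 : (C (R := ℚ) 15 : PowerSeries ℚ) = C (R := ℚ) 10 + C (R := ℚ) 5 := by
      rw [← map_add]; norm_num
    rw [h15] at hL4
    simp only [dd_mul, dd_ee]
    linear_combination hL4 - lgIpq 4 4 * hN3
  have h2 := dd_eq_zero_iff _ key
  have hc : PowerSeries.constantCoeff (R := ℚ)
      (ee * (lgIpq 0 0 * lgIpq 1 1 * lgIpq 2 2 * lgIpq 3 3 * lgIpq 4 4)) = 1 := by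
    simp only [map_mul]
    rw [c0_J 0 (by norm_num), c0_J 1 (by norm_num), c0_J 2 (by norm_num),
      c0_J 3 (by norm_num), c0_J 4 (by norm_num)]
    have : PowerSeries.constantCoeff (R := ℚ) ee = 1 := by
      simp [ee]
    rw [this]; norm_num
  rw [hc, map_one] at h2
  have hee : PowerSeries.constantCoeff (R := ℚ) (1 - PowerSeries.C (R := ℚ) (1 / 5 ^ 5) * X ^ 5) ≠ 0 := by
    have : PowerSeries.constantCoeff (R := ℚ) ee = 1 := by simp [ee]
    rw [show (1 - PowerSeries.C (R := ℚ) (1 / 5 ^ 5) * X ^ 5 : PowerSeries ℚ) = ee from rfl, this]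
    norm_num
  rw [PowerSeries.eq_inv_iff_mul_eq_one hee]
  rw [show (1 - PowerSeries.C (R := ℚ) (1 / 5 ^ 5) * X ^ 5 : PowerSeries ℚ) = ee from rfl]
  rw [mul_comm]
  exact h2
end

section
/- Let ξ = exp(2πi/5). Then the three quantities b₀₁ := ξ/(1+ξ)·Γ⁵(4/5)/Γ⁵(3/5), b₁₂ := ξ(1+ξ)³/(1+ξ+ξ²)²·Γ⁵(3/5)/Γ⁵(2/5), b₂₃ := ξ(1+ξ+ξ²)(1-ξ³)³/(1-ξ⁴)³·Γ⁵(2/5)/Γ⁵(1/5) satisfy b₂₃ = b₀₁, and hence b₀₁ + b₁₂ + b₂₃ = 2b₀₁ + b₁₂. -/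
open Complex

theorem U_plus_entries_identity
    (ξ : ℂ) (hξ : ξ = Complex.exp (2 * Real.pi * Complex.I / 5))
    (b01 b12 b23 : ℂ)
    (h01 : b01 = ξ / (1 + ξ) * (Complex.Gamma (4 / 5) ^ 5 / Complex.Gamma (3 / 5) ^ 5))
    (h12 : b12 = ξ * (1 + ξ) ^ 3 / (1 + ξ + ξ ^ 2) ^ 2 *
      (Complex.Gamma (3 / 5) ^ 5 / Complex.Gamma (2 / 5) ^ 5))
    (h23 : b23 = ξ * (1 + ξ + ξ ^ 2) * (1 - ξ ^ 3) ^ 3 / (1 - ξ ^ 4) ^ 3 *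
      (Complex.Gamma (2 / 5) ^ 5 / Complex.Gamma (1 / 5) ^ 5)) :
    b23 = b01 ∧ b01 + b12 + b23 = 2 * b01 + b12 := by
  have hξ5 : ξ ^ 5 = 1 := by
    rw [hξ, ← Complex.exp_nat_mul]
    have : ((5:ℕ):ℂ) * (2 * Real.pi * Complex.I / 5) = 2 * Real.pi * Complex.I := by
      push_cast; ring
    rw [this, Complex.exp_two_pi_mul_I]
  have hπ : (Real.pi : ℂ) ≠ 0 := by exact_mod_cast Real.pi_ne_zero
  have h1 : ξ ≠ 1 := by
    rw [hξ, Ne, Complex.exp_eq_one_iff]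
    rintro ⟨n, hn⟩
    have h2 : (2 * (Real.pi:ℂ) * Complex.I) ≠ 0 := by
      simp [Real.pi_ne_zero, Complex.I_ne_zero]
    have key : ((1:ℂ)/5 - n) * (2 * (Real.pi:ℂ) * Complex.I) = 0 := by
      linear_combination hn
    rcases mul_eq_zero.mp key with h | h
    · have h' : ((1:ℂ)/5) = n := by linear_combination h
      have h'' : (1:ℂ) = (n:ℂ) * 5 := by linear_combination 5 * h'
      have h4 : (1:ℤ) = n * 5 := by exact_mod_cast h''
      omega
    · exact h2 h
  have hξ0 : ξ ≠ 0 := by rw [hξ]; exact Complex.exp_ne_zero _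
  have hsum : 1 + ξ + ξ^2 + ξ^3 + ξ^4 = 0 := by
    have h := sub_ne_zero.mpr h1
    apply mul_left_cancel₀ h
    linear_combination hξ5
  have h3 : ξ ^ 3 ≠ 1 := by
    intro h; exact h1 (by linear_combination (1 + ξ^3) * h - ξ * hξ5)
  have h4 : ξ ^ 4 ≠ 1 := by
    intro h; exact h1 (by linear_combination hξ5 - ξ * h)
  have h1ξ : (1 : ℂ) + ξ ≠ 0 := by
    intro h
    have : (1:ℂ) = -1 := by linear_combination (ξ^4 - ξ^3 + ξ^2 - ξ + 1) * h - hξ5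
    norm_num at this
  have h1ξξ2 : (1 : ℂ) + ξ + ξ^2 ≠ 0 := by
    intro h; exact h3 (by linear_combination (ξ - 1) * h)
  have h1mξ4 : (1 : ℂ) - ξ^4 ≠ 0 := sub_ne_zero.mpr (Ne.symm h4)
  have hs1ne : ξ^3 - ξ^2 ≠ 0 := by
    intro h
    exact mul_ne_zero (pow_ne_zero 2 hξ0) (sub_ne_zero.mpr h1) (by linear_combination h)
  have hs2ne : ξ^4 - ξ ≠ 0 := by
    intro h
    exact mul_ne_zero hξ0 (sub_ne_zero.mpr h3) (by linear_combination h)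
  have e1 : Complex.exp ((Real.pi:ℂ) * (1/5) * Complex.I) = -ξ^3 := by
    rw [hξ, ← Complex.exp_nat_mul]
    have h : ((3:ℕ):ℂ) * (2*Real.pi*Complex.I/5)
        = (Real.pi:ℂ) * (1/5) * Complex.I + Real.pi * Complex.I := by push_cast; ring
    rw [h, Complex.exp_add, Complex.exp_pi_mul_I]; ring
  have e2 : Complex.exp (-((Real.pi:ℂ) * (1/5)) * Complex.I) = -ξ^2 := by
    rw [hξ, ← Complex.exp_nat_mul]
    have h : ((2:ℕ):ℂ) * (2*Real.pi*Complex.I/5)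
        = -((Real.pi:ℂ) * (1/5)) * Complex.I + Real.pi * Complex.I := by push_cast; ring
    rw [h, Complex.exp_add, Complex.exp_pi_mul_I]; ring
  have e3 : Complex.exp ((Real.pi:ℂ) * (2/5) * Complex.I) = ξ := by
    rw [hξ]; congr 1; ring
  have e4 : Complex.exp (-((Real.pi:ℂ) * (2/5)) * Complex.I) = ξ^4 := by
    rw [hξ, ← Complex.exp_nat_mul]
    have h : ((4:ℕ):ℂ) * (2*Real.pi*Complex.I/5)
        = -((Real.pi:ℂ) * (2/5)) * Complex.I + 2 * Real.pi * Complex.I := by push_cast; ring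
    rw [h, Complex.exp_add, Complex.exp_two_pi_mul_I]; ring
  have hs1 : Complex.sin ((Real.pi:ℂ) * (1/5)) = (ξ^3 - ξ^2) * Complex.I / 2 := by
    rw [show Complex.sin ((Real.pi:ℂ) * (1/5))
        = (Complex.exp (-((Real.pi:ℂ) * (1/5)) * Complex.I)
          - Complex.exp ((Real.pi:ℂ) * (1/5) * Complex.I)) * Complex.I / 2 from rfl,
      e1, e2]
    ring
  have hs2 : Complex.sin ((Real.pi:ℂ) * (2/5)) = (ξ^4 - ξ) * Complex.I / 2 := by
    rw [show Complex.sin ((Real.pi:ℂ) * (2/5))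
        = (Complex.exp (-((Real.pi:ℂ) * (2/5)) * Complex.I)
          - Complex.exp ((Real.pi:ℂ) * (2/5) * Complex.I)) * Complex.I / 2 from rfl,
      e3, e4]
  have hs1f : (ξ^3 - ξ^2) * Complex.I / 2 ≠ 0 :=
    div_ne_zero (mul_ne_zero hs1ne Complex.I_ne_zero) two_ne_zero
  have hs2f : (ξ^4 - ξ) * Complex.I / 2 ≠ 0 :=
    div_ne_zero (mul_ne_zero hs2ne Complex.I_ne_zero) two_ne_zero
  have hA : Complex.Gamma (1/5) * Complex.Gamma (4/5) * ((ξ^3 - ξ^2) * Complex.I / 2)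
      = (Real.pi : ℂ) := by
    have h := Complex.Gamma_mul_Gamma_one_sub (1/5)
    rw [show ((1:ℂ) - 1/5) = 4/5 by norm_num, hs1] at h
    rw [h, div_mul_cancel₀ _ hs1f]
  have hB : Complex.Gamma (2/5) * Complex.Gamma (3/5) * ((ξ^4 - ξ) * Complex.I / 2)
      = (Real.pi : ℂ) := by
    have h := Complex.Gamma_mul_Gamma_one_sub (2/5)
    rw [show ((1:ℂ) - 2/5) = 3/5 by norm_num, hs2] at h
    rw [h, div_mul_cancel₀ _ hs2f]
  have hg1 : Complex.Gamma (1/5) ≠ 0 := Complex.Gamma_ne_zero_of_re_pos (by norm_num)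
  have hg2 : Complex.Gamma (2/5) ≠ 0 := Complex.Gamma_ne_zero_of_re_pos (by norm_num)
  have hg3 : Complex.Gamma (3/5) ≠ 0 := Complex.Gamma_ne_zero_of_re_pos (by norm_num)
  have hg4 : Complex.Gamma (4/5) ≠ 0 := Complex.Gamma_ne_zero_of_re_pos (by norm_num)
  have h5 : (Complex.Gamma (2/5) * Complex.Gamma (3/5) * ((ξ^4 - ξ) * Complex.I / 2))^5
      = (Complex.Gamma (1/5) * Complex.Gamma (4/5) * ((ξ^3 - ξ^2) * Complex.I / 2))^5 := by
    rw [hA, hB]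
  have hmain : b23 = b01 := by
    rw [h23, h01]
    rw [div_mul_div_comm, div_mul_div_comm, div_eq_div_iff (by
      exact mul_ne_zero (pow_ne_zero 3 h1mξ4) (pow_ne_zero 5 hg1)) (by
      exact mul_ne_zero h1ξ (pow_ne_zero 5 hg3))]
    have hI : Complex.I ^ 2 = -1 := Complex.I_sq
    linear_combination
      ((32/5) * (ξ + 3*ξ^2 + ξ^3) * Complex.I) * h5
      + ((ξ + ξ^2 - 4*ξ^4 - 4*ξ^5 + (4/5)*ξ^6 + (33/5)*ξ^7 + (32/5)*ξ^8 - (14/5)*ξ^9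
          - 6*ξ^10 - (26/5)*ξ^11 + (18/5)*ξ^12 + (17/5)*ξ^13 + (11/5)*ξ^14 - 2*ξ^15
          - (6/5)*ξ^16 - (2/5)*ξ^17 + (2/5)*ξ^18 + (1/5)*ξ^19)
            * (Complex.Gamma (2/5)^5 * Complex.Gamma (3/5)^5)
        - (ξ - ξ^2 - 3*ξ^5 + 4*ξ^6 - ξ^7 + 3*ξ^9 - 6*ξ^10 + (19/5)*ξ^11 - (2/5)*ξ^12
          - (3/5)*ξ^13 + (1/5)*ξ^14)
            * (Complex.Gamma (1/5)^5 * Complex.Gamma (4/5)^5)) * hsum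
      + ((Complex.I^4 - Complex.I^2 + 1) * (-(ξ + 3*ξ^2 + ξ^3)/5)
          * ((ξ^4 - ξ)^5 * (Complex.Gamma (2/5)^5 * Complex.Gamma (3/5)^5)
            - (ξ^3 - ξ^2)^5 * (Complex.Gamma (1/5)^5 * Complex.Gamma (4/5)^5))) * hI
  exact ⟨hmain, by rw [hmain]; ring⟩
end
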